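/- arXiv:2107.11916 — 3 statements merged into one kernel-verified Lean document; each statement's English description precedes it below -/
import Mathlib

section
/- Let A be a K-subalgebra of K[x] of finite codimension, let α ∈ K with α ∉ Sp(A), and let D be an α-derivation of A. Then there exists a constant c ∈ K such that D(f) = c·f'(α) for every f ∈ A. -/
open Polynomial

set_option maxHeartbeats 1000000
set_option synthInstance.maxHeartbeats 400000

/-- Bezout: a finite set of polynomials with no common root generates the unit ideal. -/
lemma spanTop_of_no_common_root {K : Type*} [Field K] [IsAlgClosed K]
    (S : Finset (Polynomial K)) (h : ∀ γ : K, ∃ w ∈ S, w.eval γ ≠ 0) :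
    Ideal.span (S : Set (Polynomial K)) = ⊤ := by
  set J := Ideal.span (S : Set (Polynomial K)) with hJ
  haveI : J.IsPrincipal := inferInstance
  set d := Submodule.IsPrincipal.generator J with hd
  have hgen : Ideal.span {d} = J := Ideal.span_singleton_generator J
  have hdvd : ∀ w ∈ S, d ∣ w := by
    intro w hw
    rw [← Ideal.mem_span_singleton, hgen]
    exact Ideal.subset_span hw
  have hdu : IsUnit d := by
    by_contra hdu
    obtain ⟨w0, hw0S, hw0⟩ := h 0
    have hd0 : d ≠ 0 := by
      intro hzero
      obtain ⟨t, ht⟩ := hdvd w0 hw0S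
      rw [hzero, zero_mul] at ht
      rw [ht] at hw0
      simp at hw0
    have hdeg : d.degree ≠ 0 := fun hh => hdu (Polynomial.isUnit_iff_degree_eq_zero.mpr hh)
    obtain ⟨γ, hγ⟩ := IsAlgClosed.exists_root d hdeg
    obtain ⟨w, hwS, hw⟩ := h γ
    obtain ⟨t, rfl⟩ := hdvd w hwS
    apply hw
    simp [Polynomial.IsRoot] at hγ ⊢
    simp [hγ]
  rw [← hgen]
  exact Ideal.span_singleton_eq_top.mpr hdu

/-- Divisibility: if for each root of `P` we have an element vanishing there,
the product of suitable powers is divisible by `P`. -/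
lemma dvd_prod_of_root_elems {K : Type*} [Field K] [IsAlgClosed K] [DecidableEq K]
    (P : Polynomial K) (hP : P ≠ 0) (b : K → Polynomial K)
    (hb : ∀ β ∈ P.roots.toFinset, (X - C β) ∣ b β) :
    P ∣ ∏ β ∈ P.roots.toFinset, (b β) ^ (P.roots.count β) := by
  have hsp : P = C P.leadingCoeff *
      (Multiset.map (fun a => X - C a) P.roots).prod :=
    Polynomial.Splits.eq_prod_roots (IsAlgClosed.splits P)
  have hprod : (Multiset.map (fun a => X - C a) P.roots).prod
      = ∏ β ∈ P.roots.toFinset, (X - C β) ^ (P.roots.count β) :=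
    Finset.prod_multiset_map_count _ _
  have hQdvd : (∏ β ∈ P.roots.toFinset, (X - C β) ^ (P.roots.count β)) ∣
      ∏ β ∈ P.roots.toFinset, (b β) ^ (P.roots.count β) :=
    Finset.prod_dvd_prod_of_dvd _ _ (fun β hβ => pow_dvd_pow_of_dvd (hb β hβ) _)
  have hu : IsUnit (C P.leadingCoeff) :=
    Polynomial.isUnit_C.mpr (isUnit_iff_ne_zero.mpr (Polynomial.leadingCoeff_ne_zero.mpr hP))
  nth_rewrite 1 [hsp]
  rw [hprod]
  exact (IsUnit.mul_left_dvd hu).mpr hQdvd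

/-- If g = (X - C α) * v then g'(α) = v(α). -/
lemma deriv_eval_of_factor {K : Type*} [Field K] {g v : Polynomial K} {α : K}
    (h : g = (X - C α) * v) : (derivative g).eval α = v.eval α := by
  subst h
  simp [derivative_mul]


/-- The subalgebra `A` as a submodule over itself inside `K[x]`. -/
def algSubmodule {K : Type*} [Field K] (A : Subalgebra K (Polynomial K)) :
    Submodule ↥A (Polynomial K) where
  carrier := A
  add_mem' := fun h1 h2 => A.add_mem h1 h2
  zero_mem' := A.zero_mem
  smul_mem' := fun a f hf => by
    rw [Subalgebra.smul_def]; exact A.mul_mem a.2 hf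

lemma mem_algSubmodule {K : Type*} [Field K] (A : Subalgebra K (Polynomial K))
    (f : Polynomial K) : f ∈ algSubmodule A ↔ f ∈ A := Iff.rfl


/-- FG of the quotient over the subalgebra. -/
lemma quot_fg {K : Type*} [Field K] (A : Subalgebra K (Polynomial K))
    (hfin : FiniteDimensional K (Polynomial K ⧸ Subalgebra.toSubmodule A)) :
    (⊤ : Submodule ↥A (Polynomial K ⧸ algSubmodule A)).FG := by
  classical
  set p : Submodule K (Polynomial K) := Subalgebra.toSubmodule A with hp
  obtain ⟨Sq, hSq⟩ := Module.finite_def.mp hfin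
  set pre : (Polynomial K ⧸ p) → Polynomial K := Function.surjInv (Submodule.Quotient.mk_surjective p) with hpre
  set T : Finset (Polynomial K) := Sq.image pre with hT
  -- every polynomial is congruent mod A to an element of span K T
  have hTspan : ∀ f : Polynomial K, ∃ t ∈ Submodule.span K (T : Set (Polynomial K)), f - t ∈ A := by
    intro f
    have h1 : p.mkQ f ∈ Submodule.span K (Sq : Set (Polynomial K ⧸ p)) := by
      rw [hSq]; trivial
    have h2 : (Sq : Set (Polynomial K ⧸ p)) ⊆ p.mkQ '' (T : Set (Polynomial K)) := by
      intro y hy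
      refine ⟨pre y, ?_, ?_⟩
      · exact Finset.mem_coe.mpr (Finset.mem_image_of_mem pre hy)
      · exact Function.surjInv_eq (Submodule.Quotient.mk_surjective p) y
    have h3 : p.mkQ f ∈ Submodule.span K (p.mkQ '' (T : Set (Polynomial K))) :=
      Submodule.span_mono h2 h1
    rw [Submodule.span_image] at h3
    obtain ⟨t, ht, hte⟩ := h3
    refine ⟨t, ht, ?_⟩
    have : t - f ∈ p := by
      have : p.mkQ t = p.mkQ f := hte
      simpa [Submodule.Quotient.eq] using this
    have := p.neg_mem this
    simpa [hp] using this
  refine ⟨T.image (Submodule.Quotient.mk (p := algSubmodule A)), ?_⟩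
  rw [eq_top_iff]
  rintro q -
  obtain ⟨f, rfl⟩ := Submodule.Quotient.mk_surjective (algSubmodule A) q
  obtain ⟨t, htsp, hft⟩ := hTspan f
  have hmk : Submodule.Quotient.mk (p := algSubmodule A) f
      = Submodule.Quotient.mk (p := algSubmodule A) t :=
    (Submodule.Quotient.eq _).mpr hft
  rw [hmk]
  clear hmk hft
  induction htsp using Submodule.span_induction with
  | mem x hx =>
      exact Submodule.subset_span
        (Finset.mem_coe.mpr (Finset.mem_image_of_mem _ (Finset.mem_coe.mp hx)))
  | zero => simp
  | add x y _ _ hx hy =>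
      rw [show Submodule.Quotient.mk (p := algSubmodule A) (x + y)
        = Submodule.Quotient.mk (p := algSubmodule A) x
          + Submodule.Quotient.mk (p := algSubmodule A) y from rfl] at *
      exact Submodule.add_mem _ hx hy
  | smul c x _ hx =>
      have hCc : (C c : Polynomial K) ∈ A := by
        simpa [Polynomial.algebraMap_eq] using A.algebraMap_mem c
      have hsm : c • x = (⟨C c, hCc⟩ : ↥A) • x := by
        rw [Subalgebra.smul_def (A := Polynomial K) (⟨C c, hCc⟩ : ↥A) x, smul_eq_mul, smul_eq_C_mul]
      rw [hsm, Submodule.Quotient.mk_smul (algSubmodule A)]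
      exact Submodule.smul_mem _ _ hx

lemma C_mem_subalg {K : Type*} [Field K] (A : Subalgebra K (Polynomial K)) (c : K) :
    (C c : Polynomial K) ∈ A := by
  simpa [Polynomial.algebraMap_eq] using A.algebraMap_mem c

lemma exists_conductor {K : Type*} [Field K] [IsAlgClosed K]
    (A : Subalgebra K (Polynomial K))
    (hfin : FiniteDimensional K (Polynomial K ⧸ Subalgebra.toSubmodule A)) (α : K)
    (hsep : ∀ β : K, β ≠ α → ∃ f ∈ A, f.eval α ≠ f.eval β)
    (g : Polynomial K) (hgA : g ∈ A) (hgα : g.eval α = 0)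
    (hg' : (derivative g).eval α ≠ 0) :
    ∃ r ∈ A, r.eval α ≠ 0 ∧ ∀ f : Polynomial K, r * f ∈ A := by
  classical
  obtain ⟨v, hv⟩ := (dvd_iff_isRoot.mpr hgα : (X - C α) ∣ g)
  have hvα : v.eval α ≠ 0 := by rw [← deriv_eval_of_factor hv]; exact hg'
  have hv0 : v ≠ 0 := fun h => hvα (by simp [h])
  set Rset := v.roots.toFinset with hRset
  have hbex : ∀ β : K, ∃ bb : Polynomial K,
      bb ∈ A ∧ bb.eval α = 0 ∧ (β ∈ Rset → bb.eval β ≠ 0) := by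
    intro β
    by_cases hβ : β ∈ Rset
    · have hβα : β ≠ α := by
        intro h
        subst h
        exact hvα ((mem_roots hv0).mp (Multiset.mem_toFinset.mp hβ))
      obtain ⟨f, hfA, hfne⟩ := hsep β hβα
      refine ⟨f - C (f.eval α), A.sub_mem hfA (C_mem_subalg A _), by simp, fun _ => ?_⟩
      simp only [eval_sub, eval_C]
      exact sub_ne_zero.mpr (Ne.symm hfne)
    · exact ⟨0, A.zero_mem, by simp, fun h => absurd h hβ⟩
  choose b hbA hbα hbβ using hbex
  have hbdvd : ∀ β : K, ∃ cc, b β = (X - C α) * cc :=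
    fun β => dvd_iff_isRoot.mpr (hbα β)
  choose c hc using hbdvd
  set S : Finset (Polynomial K) := insert v (Rset.image c) with hS
  have hnocomm : ∀ γ : K, ∃ w ∈ S, w.eval γ ≠ 0 := by
    intro γ
    by_cases hγ : v.eval γ = 0
    · have hγR : γ ∈ Rset := by
        rw [hRset, Multiset.mem_toFinset, mem_roots hv0]
        exact hγ
      refine ⟨c γ, Finset.mem_insert_of_mem (Finset.mem_image_of_mem c hγR), ?_⟩
      have h1 : (b γ).eval γ ≠ 0 := hbβ γ hγR
      rw [hc γ] at h1
      simp only [eval_mul] at h1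
      exact fun h => h1 (by rw [h, mul_zero])
    · exact ⟨v, Finset.mem_insert_self _ _, hγ⟩
  have hstop := spanTop_of_no_common_root S hnocomm
  have hone : (1 : Polynomial K) ∈ Ideal.span (S : Set (Polynomial K)) := by
    rw [hstop]; trivial
  obtain ⟨Y, -, hY⟩ := Submodule.mem_span_finset.mp hone
  have hSmem : ∀ w ∈ S, (X - C α) * w ∈ A := by
    intro w hw
    rcases Finset.mem_insert.mp hw with h | h
    · subst h; rw [← hv]; exact hgA
    · obtain ⟨β, hβ, rfl⟩ := Finset.mem_image.mp h
      rw [← hc β]; exact hbA β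
  set N := algSubmodule A with hN
  set I : Ideal ↥A := RingHom.ker ((evalRingHom α).comp A.val) with hI
  have hIe : ∀ a : ↥A, a ∈ I ↔ (a : Polynomial K).eval α = 0 := by
    intro a
    rw [hI, RingHom.mem_ker]
    constructor <;> intro h <;> exact h
  have hle : (⊤ : Submodule ↥A (Polynomial K ⧸ N)) ≤ I • ⊤ := by
    rintro q -
    obtain ⟨f, rfl⟩ := Submodule.Quotient.mk_surjective N q
    rw [show (Submodule.Quotient.mk f : Polynomial K ⧸ N) = N.mkQ f from rfl]
    obtain ⟨q₁, hq₁⟩ : (X - C α) ∣ (f - C (f.eval α)) :=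
      dvd_iff_isRoot.mpr (by simp [IsRoot])
    have hmk : N.mkQ f = N.mkQ ((X - C α) * q₁) := by
      rw [Submodule.mkQ_apply, Submodule.mkQ_apply, Submodule.Quotient.eq]
      have he : f - (X - C α) * q₁ = C (f.eval α) := by rw [← hq₁]; ring
      rw [he]
      exact C_mem_subalg A _
    have hexp : (X - C α) * q₁ = ∑ w ∈ S, ((X - C α) * w) * (q₁ * Y w) := by
      have h0 : (X - C α) * q₁ = ((X - C α) * q₁) * ∑ w ∈ S, Y w • w := by
        rw [hY, mul_one]
      rw [h0, Finset.mul_sum]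
      refine Finset.sum_congr rfl (fun w hw => ?_)
      simp only [smul_eq_mul]
      ring
    rw [hmk, hexp, map_sum]
    apply Submodule.sum_mem
    intro w hw
    have hterm : N.mkQ (((X - C α) * w) * (q₁ * Y w))
        = (⟨(X - C α) * w, hSmem w hw⟩ : ↥A) • N.mkQ (q₁ * Y w) := by
      rw [← map_smul]
      congr 1
    rw [hterm]
    have hIw : (⟨(X - C α) * w, hSmem w hw⟩ : ↥A) ∈ I := (hIe _).mpr (by simp)
    exact Submodule.smul_mem_smul hIw trivial
  obtain ⟨r', hr1, hr2⟩ :=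
    Submodule.exists_sub_one_mem_and_smul_eq_zero_of_fg_of_le_smul I ⊤ (quot_fg A hfin) hle
  refine ⟨(r' : Polynomial K), r'.2, ?_, ?_⟩
  · have h1 := (hIe _).mp hr1
    have h2 : ((r' : Polynomial K) - 1).eval α = 0 := by
      have hco : ((r' - 1 : ↥A) : Polynomial K) = (r' : Polynomial K) - 1 := rfl
      rw [← hco]
      exact h1
    intro h0
    rw [eval_sub, eval_one, h0] at h2
    norm_num at h2
  · intro f
    have h3 := hr2 (N.mkQ f) trivial
    rw [← map_smul] at h3
    have h4 : r' • f ∈ N := by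
      rwa [Submodule.mkQ_apply, Submodule.Quotient.mk_eq_zero] at h3
    rwa [Subalgebra.smul_def, smul_eq_mul] at h4

/-- The spectrum of a subalgebra `A` of `K[x]`. -/
def subalgebraSpectrum {K : Type*} [Field K] (A : Subalgebra K (Polynomial K)) : Set K :=
  {α | (∀ f ∈ A, (Polynomial.derivative f).eval α = 0) ∨
    ∃ β : K, β ≠ α ∧ ∀ f ∈ A, f.eval α = f.eval β}

/-- `D` is an `α`-derivation of the subalgebra `A` of `K[x]`. -/
def IsAlphaDerivation {K : Type*} [Field K] (A : Subalgebra K (Polynomial K)) (α : K)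
    (D : A →ₗ[K] K) : Prop :=
  ∀ f g : A, D (f * g) = D f * (g : Polynomial K).eval α + (f : Polynomial K).eval α * D g

theorem trivial_derivation_of_not_mem_spectrum
    {K : Type*} [Field K] [IsAlgClosed K] [CharZero K]
    (A : Subalgebra K (Polynomial K))
    (hfin : FiniteDimensional K (Polynomial K ⧸ Subalgebra.toSubmodule A))
    (α : K) (hα : α ∉ subalgebraSpectrum A)
    (D : A →ₗ[K] K) (hD : IsAlphaDerivation A α D) :
    ∃ c : K, ∀ f : A, D f = c * (Polynomial.derivative (f : Polynomial K)).eval α := by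
  classical
  rw [subalgebraSpectrum, Set.mem_setOf_eq] at hα
  push_neg at hα
  obtain ⟨⟨g₀, hg₀A, hg₀'⟩, hsep⟩ := hα
  set g : Polynomial K := g₀ - C (g₀.eval α) with hgdef
  have hgA : g ∈ A := A.sub_mem hg₀A (C_mem_subalg A _)
  have hgα : g.eval α = 0 := by simp [hgdef]
  have hg' : (derivative g).eval α ≠ 0 := by simpa [hgdef] using hg₀'
  obtain ⟨r, hrA, hrα, hrcond⟩ := exists_conductor A hfin α hsep g hgA hgα hg'
  obtain ⟨v, hv⟩ := (dvd_iff_isRoot.mpr hgα : (X - C α) ∣ g)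
  have hvα : v.eval α ≠ 0 := by rw [← deriv_eval_of_factor hv]; exact hg'
  have hD1 : D 1 = 0 := by
    have h := hD 1 1
    simp only [mul_one, one_mul, OneMemClass.coe_one, eval_one] at h
    exact left_eq_add.mp h
  set P : Polynomial K := v * v * r with hP
  have hPα : P.eval α ≠ 0 := by
    rw [hP]
    simp only [eval_mul]
    exact mul_ne_zero (mul_ne_zero hvα hvα) hrα
  have hP0 : P ≠ 0 := fun h => hPα (by simp [h])
  have hbex : ∀ β : K, ∃ bb, bb ∈ A ∧ bb.eval α ≠ 0 ∧
      (β ∈ P.roots.toFinset → bb.eval β = 0) := by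
    intro β
    by_cases hβ : β ∈ P.roots.toFinset
    · have hβα : β ≠ α := by
        rintro rfl
        exact hPα ((mem_roots hP0).mp (Multiset.mem_toFinset.mp hβ))
      obtain ⟨f, hfA, hfne⟩ := hsep β hβα
      refine ⟨f - C (f.eval β), A.sub_mem hfA (C_mem_subalg A _), ?_, fun _ => by simp⟩
      simp only [eval_sub, eval_C]
      exact sub_ne_zero.mpr hfne
    · exact ⟨1, A.one_mem, by simp, fun h => absurd h hβ⟩
  choose b hbA hbα hbβ using hbex
  set s₀ : Polynomial K := ∏ β ∈ P.roots.toFinset, (b β) ^ (P.roots.count β) with hs₀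
  have hs₀A : s₀ ∈ A := A.prod_mem (fun β _ => A.pow_mem (hbA β) _)
  have hs₀α : s₀.eval α ≠ 0 := by
    simp only [hs₀, eval_prod, eval_pow]
    exact Finset.prod_ne_zero_iff.mpr (fun β _ => pow_ne_zero _ (hbα β))
  have hdvd : P ∣ s₀ :=
    dvd_prod_of_root_elems P hP0 b (fun β hβ => dvd_iff_isRoot.mpr (hbβ β hβ))
  obtain ⟨w, hw⟩ := hdvd
  have crux : ∀ (h : Polynomial K) (hA : h ∈ A), h.eval α = 0 →
      (derivative h).eval α = 0 → D ⟨h, hA⟩ = 0 := by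
    intro h hA hα0 hα1
    obtain ⟨h₁, hh₁⟩ := (dvd_iff_isRoot.mpr hα0 : (X - C α) ∣ h)
    have hh₁α : h₁.eval α = 0 := by rw [← deriv_eval_of_factor hh₁]; exact hα1
    obtain ⟨u, hu⟩ := (dvd_iff_isRoot.mpr hh₁α : (X - C α) ∣ h₁)
    set a : Polynomial K := r * (u * w) with ha
    have haA : a ∈ A := hrcond (u * w)
    have hkey : h * s₀ = (g * a) * g := by
      rw [hh₁, hu, hw, hP, hv, ha]; ring
    have hgaA : g * a ∈ A := A.mul_mem hgA haA
    have hsub : (⟨h, hA⟩ : ↥A) * ⟨s₀, hs₀A⟩ = (⟨g * a, hgaA⟩ : ↥A) * ⟨g, hgA⟩ := by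
      apply Subtype.ext
      push_cast
      exact hkey
    have e1 : D ((⟨h, hA⟩ : ↥A) * ⟨s₀, hs₀A⟩) = D ⟨h, hA⟩ * s₀.eval α := by
      rw [hD ⟨h, hA⟩ ⟨s₀, hs₀A⟩]
      simp [hα0]
    have e2 : D ((⟨g * a, hgaA⟩ : ↥A) * ⟨g, hgA⟩) = 0 := by
      rw [hD ⟨g * a, hgaA⟩ ⟨g, hgA⟩]
      simp [hgα, eval_mul]
    rw [hsub, e2] at e1
    rcases mul_eq_zero.mp e1.symm with h' | h'
    · exact h'
    · exact absurd h' hs₀α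
  set gd : K := (derivative g).eval α with hgd
  refine ⟨D ⟨g, hgA⟩ / gd, ?_⟩
  intro f
  set k₁ : K := (f : Polynomial K).eval α with hk₁
  set k₂ : K := (derivative (f : Polynomial K)).eval α with hk₂
  set hp : Polynomial K := (f : Polynomial K) - C k₁ - C (k₂ / gd) * g with hhp
  have hpA : hp ∈ A :=
    A.sub_mem (A.sub_mem f.2 (C_mem_subalg A _)) (A.mul_mem (C_mem_subalg A _) hgA)
  have h0 : hp.eval α = 0 := by simp [hhp, hgα, hk₁]
  have h1 : (derivative hp).eval α = 0 := by
    rw [hhp]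
    simp only [derivative_sub, derivative_mul, derivative_C, eval_sub, eval_add, eval_mul,
      eval_C, zero_mul, add_zero, zero_add, ← hgd, ← hk₂, hgα, mul_zero]
    field_simp
    simp
  have hDh := crux hp hpA h0 h1
  have hfd : f = ⟨hp, hpA⟩ + k₁ • (1 : ↥A) + (k₂ / gd) • ⟨g, hgA⟩ := by
    apply Subtype.ext
    push_cast
    rw [hhp]
    simp only [smul_eq_C_mul]
    ring
  rw [hfd, map_add, map_add, map_smul, map_smul, hDh, hD1]
  simp only [smul_eq_mul, mul_zero, zero_add]
  field_simp
end

section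
/- Let C_1, ..., C_t be pairwise disjoint finite subsets of K, each with at least two elements, and let A = {f ∈ K[x] : f is constant on each C_i, i.e. f(β) = f(γ) for all β, γ ∈ C_i and all i}. Then: (1) for every i and every α ∈ C_i, every α-derivation D of A has the form D(f) = Σ_{β ∈ C_i} c_β · f'(β) for some constants c_β ∈ K; (2) for every α ∈ K not belonging to C_1 ∪ ⋯ ∪ C_t, every α-derivation D of A has the form D(f) = c·f'(α) for some constant c ∈ K. -/
open Polynomial

section Aux
open Finset
set_option linter.unusedSectionVars false

variable {K : Type*} [Field K] [DecidableEq K]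


/-- nodal derivative at a node is nonzero. -/
lemma nodal_deriv_ne_zero {s : Finset K} {γ : K} (hγ : γ ∈ s) :
    (Lagrange.nodal s id).derivative.eval γ ≠ 0 := by
  rw [show γ = id γ from rfl, Lagrange.eval_nodal_derivative_eval_node_eq hγ]
  exact Lagrange.eval_nodal_not_at_node fun δ hδ => (Finset.mem_erase.mp hδ).1.symm

/-- Hermite interpolation: prescribe values and derivatives at distinct nodes. -/
lemma hermite_exists (s : Finset K) (v w : K → K) :
    ∃ h : K[X], ∀ γ ∈ s, h.eval γ = v γ ∧ h.derivative.eval γ = w γ := by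
  set s0 := Lagrange.interpolate s id v with hs0
  set u := Lagrange.interpolate s id
    (fun γ => (w γ - s0.derivative.eval γ) / (Lagrange.nodal s id).derivative.eval γ) with hu
  have hz : ∀ γ ∈ s, (Lagrange.nodal s id).eval γ = 0 := fun γ hγ => by
    rw [Lagrange.eval_nodal]; exact Finset.prod_eq_zero hγ (sub_self γ)
  refine ⟨s0 + Lagrange.nodal s id * u, fun γ hγ => ⟨?_, ?_⟩⟩
  · rw [eval_add, eval_mul, hz γ hγ, zero_mul, add_zero]
    exact Lagrange.eval_interpolate_at_node v (Set.injOn_id _) hγ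
  · rw [derivative_add, derivative_mul, eval_add, eval_add, eval_mul, eval_mul,
      hz γ hγ, zero_mul, add_zero]
    have h2 : u.eval γ = (w γ - s0.derivative.eval γ) / (Lagrange.nodal s id).derivative.eval γ :=
      Lagrange.eval_interpolate_at_node _ (Set.injOn_id _) hγ
    rw [h2]
    field_simp [nodal_deriv_ne_zero hγ]
    ring

/-- Double vanishing at the nodes gives divisibility by the square of the nodal polynomial. -/
lemma sq_nodal_dvd (s : Finset K) (h : K[X])
    (hv : ∀ γ ∈ s, h.eval γ = 0) (hd : ∀ γ ∈ s, h.derivative.eval γ = 0) :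
    (Lagrange.nodal s id) ^ 2 ∣ h := by
  rw [Lagrange.nodal, ← Finset.prod_pow]
  refine Finset.prod_dvd_of_coprime (fun a _ b _ hab => ?_) (fun γ hγ => ?_)
  · exact (Polynomial.pairwise_coprime_X_sub_C Function.injective_id hab).pow
  · obtain ⟨h₁, rfl⟩ := (dvd_iff_isRoot.mpr (hv γ hγ) : X - Polynomial.C γ ∣ h)
    have hd' := hd γ hγ
    simp only [derivative_mul, derivative_sub, derivative_X, derivative_C, sub_zero, eval_add,
      eval_mul, eval_sub, eval_X, eval_C, sub_self, zero_mul, add_zero, eval_one, one_mul,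
      mul_zero, zero_add] at hd'
    obtain ⟨h₂, rfl⟩ := (dvd_iff_isRoot.mpr hd' : X - Polynomial.C γ ∣ h₁)
    exact ⟨h₂, by simp only [id_eq]; ring⟩

/-- Single vanishing at the nodes gives divisibility by the nodal polynomial. -/
lemma nodal_dvd (s : Finset K) (h : K[X]) (hv : ∀ γ ∈ s, h.eval γ = 0) :
    (Lagrange.nodal s id) ∣ h := by
  rw [Lagrange.nodal]
  refine Finset.prod_dvd_of_coprime (fun a _ b _ hab => ?_) (fun γ hγ => ?_)
  · exact Polynomial.pairwise_coprime_X_sub_C Function.injective_id hab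
  · exact dvd_iff_isRoot.mpr (hv γ hγ)

/-- Coprimality of X - C γ with a polynomial not vanishing at γ. -/
lemma isCoprime_X_sub_C_of_ne {γ : K} {r : K[X]} (h : r.eval γ ≠ 0) :
    IsCoprime (X - Polynomial.C γ) r := by
  obtain ⟨s, hs⟩ := (dvd_iff_isRoot.mpr (by simp) : X - Polynomial.C γ ∣ r - Polynomial.C (r.eval γ))
  refine ⟨-(Polynomial.C (r.eval γ)⁻¹ * s), Polynomial.C (r.eval γ)⁻¹, ?_⟩
  have : r - (X - Polynomial.C γ) * s = Polynomial.C (r.eval γ) := by rw [← hs]; ring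
  calc -(Polynomial.C (r.eval γ)⁻¹ * s) * (X - Polynomial.C γ) + Polynomial.C (r.eval γ)⁻¹ * r
      = Polynomial.C (r.eval γ)⁻¹ * (r - (X - Polynomial.C γ) * s) := by ring
    _ = 1 := by rw [this, ← Polynomial.C_mul, inv_mul_cancel₀ h, Polynomial.C_1]

lemma isCoprime_nodal {s : Finset K} {r : K[X]} (h : ∀ γ ∈ s, r.eval γ ≠ 0) :
    IsCoprime (Lagrange.nodal s id) r := by
  rw [Lagrange.nodal]
  exact IsCoprime.prod_left fun γ hγ => isCoprime_X_sub_C_of_ne (h γ hγ)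


lemma subalg_mem_C {A : Subalgebra K (Polynomial K)} (a : K) : Polynomial.C a ∈ A := by
  have := A.algebraMap_mem a
  rwa [Polynomial.algebraMap_eq] at this

end Aux

set_option maxHeartbeats 1000000 in
theorem derivations_of_cluster_algebra
    {K : Type*} [Field K] [IsAlgClosed K] [CharZero K]
    (t : ℕ) (C : Fin t → Finset K)
    (hcard : ∀ i, 2 ≤ (C i).card)
    (hdisj : ∀ i j, i ≠ j → Disjoint (C i) (C j))
    (A : Subalgebra K (Polynomial K))
    (hA : ∀ f : Polynomial K, f ∈ A ↔
      ∀ i : Fin t, ∀ β ∈ C i, ∀ γ ∈ C i, f.eval β = f.eval γ) :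
    (∀ i : Fin t, ∀ α ∈ C i, ∀ D : A →ₗ[K] K, IsAlphaDerivation A α D →
      ∃ c : K → K, ∀ f : A,
        D f = ∑ β ∈ C i, c β * (Polynomial.derivative (f : Polynomial K)).eval β) ∧
    (∀ α : K, (∀ i : Fin t, α ∉ C i) → ∀ D : A →ₗ[K] K, IsAlphaDerivation A α D →
      ∃ c : K, ∀ f : A,
        D f = c * (Polynomial.derivative (f : Polynomial K)).eval α) := by
  classical
  set T : Finset K := Finset.univ.biUnion C with hT
  have hmemT : ∀ i : Fin t, ∀ β ∈ C i, β ∈ T := fun i β hβ =>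
    Finset.mem_biUnion.mpr ⟨i, Finset.mem_univ i, hβ⟩
  set P : Polynomial K := Lagrange.nodal T id with hP
  have hPz : ∀ γ ∈ T, P.eval γ = 0 := fun γ hγ => by
    rw [hP, Lagrange.eval_nodal]; exact Finset.prod_eq_zero hγ (sub_self γ)
  have hPA : ∀ g : Polynomial K, P * g ∈ A := fun g => (hA _).mpr
    (fun i β hβ γ hγ => by
      rw [eval_mul, eval_mul, hPz β (hmemT i β hβ), hPz γ (hmemT i γ hγ), zero_mul, zero_mul])
  have hPmem : P ∈ A := by have := hPA 1; rwa [mul_one] at this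
  -- derivation basics
  have hD1 : ∀ (α : K) (D : A →ₗ[K] K), IsAlphaDerivation A α D → D 1 = 0 := by
    intro α D hD
    have := hD 1 1
    simp only [mul_one, OneMemClass.coe_one, eval_one, one_mul] at this
    exact left_eq_add.mp this
  have hDmul : ∀ (α : K) (D : A →ₗ[K] K), IsAlphaDerivation A α D →
      ∀ (u : A) (p q : Polynomial K) (hp : p ∈ A) (hq : q ∈ A), (u : Polynomial K) = p * q →
      D u = D ⟨p, hp⟩ * q.eval α + p.eval α * D ⟨q, hq⟩ := by
    intro α D hD u p q hp hq hu
    have : u = (⟨p, hp⟩ : A) * ⟨q, hq⟩ := Subtype.ext hu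
    rw [this]; exact hD _ _
  have hDzero : ∀ (α : K) (D : A →ₗ[K] K), IsAlphaDerivation A α D →
      ∀ (u : A) (p q : Polynomial K) (hp : p ∈ A) (hq : q ∈ A),
      p.eval α = 0 → q.eval α = 0 → (u : Polynomial K) = p * q → D u = 0 := by
    intro α D hD u p q hp hq hp0 hq0 hu
    rw [hDmul α D hD u p q hp hq hu, hp0, hq0, mul_zero, zero_mul, add_zero]
  constructor
  · intro i α hα D hD
    set Q : Polynomial K := Lagrange.nodal (C i) id with hQ
    set P' : Polynomial K := Lagrange.nodal (T \ C i) id with hP'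
    have hsub : C i ⊆ T := fun β hβ => hmemT i β hβ
    have hPQP' : P = Q * P' := by
      rw [hP, hQ, hP', Lagrange.nodal, Lagrange.nodal, Lagrange.nodal,
        ← Finset.prod_union Finset.disjoint_sdiff, Finset.union_sdiff_of_subset hsub]
    have hQz : ∀ γ ∈ C i, Q.eval γ = 0 := fun γ hγ => by
      rw [hQ, Lagrange.eval_nodal]; exact Finset.prod_eq_zero hγ (sub_self γ)
    have hQnz : ∀ γ, γ ∉ C i → Q.eval γ ≠ 0 := fun γ hγ => by
      rw [hQ, Lagrange.eval_nodal]
      exact Finset.prod_ne_zero_iff.mpr fun δ hδ => sub_ne_zero_of_ne (fun h => hγ (h ▸ hδ))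
    have hPαz : P.eval α = 0 := hPz α (hsub hα)
    have hPd : ∀ γ ∈ T, (Polynomial.derivative P).eval γ ≠ 0 := fun γ hγ =>
      nodal_deriv_ne_zero hγ
    -- dual basis elements
    set w : K → Polynomial K := fun β => Lagrange.interpolate T id
      (fun γ => if γ = β then ((Polynomial.derivative P).eval β)⁻¹ else 0) with hw
    have hwval : ∀ β : K, ∀ γ ∈ T, (w β).eval γ =
        if γ = β then ((Polynomial.derivative P).eval β)⁻¹ else 0 := fun β γ hγ =>
      Lagrange.eval_interpolate_at_node _ (Set.injOn_id _) hγ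
    refine ⟨fun β => D ⟨P * w β, hPA _⟩, fun f => ?_⟩
    set g : Polynomial K := (f : Polynomial K) - Polynomial.C ((f : Polynomial K).eval α)
      - ∑ β ∈ C i, Polynomial.C ((Polynomial.derivative (f : Polynomial K)).eval β) * (P * w β)
      with hg
    have hgA : g ∈ A := A.sub_mem (A.sub_mem f.2 (subalg_mem_C _))
      (A.sum_mem fun β _ => A.mul_mem (subalg_mem_C _) (hPA _))
    have hfconst : ∀ γ ∈ C i, (f : Polynomial K).eval γ = (f : Polynomial K).eval α :=
      fun γ hγ => (hA _).mp f.2 i γ hγ α hα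
    have hgval : ∀ γ ∈ C i, g.eval γ = 0 := by
      intro γ hγ
      simp only [hg, eval_sub, eval_finset_sum, eval_mul, eval_C]
      rw [hfconst γ hγ, Finset.sum_eq_zero fun β _ => by
        rw [hPz γ (hsub hγ)]; ring]
      ring
    have hgder : ∀ γ ∈ C i, (Polynomial.derivative g).eval γ = 0 := by
      intro γ hγ
      have hder : Polynomial.derivative g = Polynomial.derivative (f : Polynomial K)
          - 0 - ∑ β ∈ C i, Polynomial.C ((Polynomial.derivative (f : Polynomial K)).eval β) *
            (Polynomial.derivative P * w β + P * Polynomial.derivative (w β)) := by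
        rw [hg, derivative_sub, derivative_sub, derivative_C, derivative_sum]
        congr 1
        refine Finset.sum_congr rfl fun β _ => ?_
        rw [derivative_mul, derivative_C, derivative_mul]
        ring
      rw [hder]
      simp only [eval_sub, eval_finset_sum, eval_mul, eval_add, eval_zero, eval_C]
      rw [Finset.sum_eq_single γ
        (fun β hβ hne => by
          rw [hwval β γ (hsub hγ), if_neg (Ne.symm hne), hPz γ (hsub hγ)]; ring)
        (fun h => absurd hγ h)]
      rw [hwval γ γ (hsub hγ), if_pos rfl, hPz γ (hsub hγ),
        mul_inv_cancel₀ (hPd γ (hsub hγ))]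
      ring
    -- square roots of the cluster values of g
    have hne : ∀ j, (C j).Nonempty := fun j => Finset.card_pos.mp (by have := hcard j; omega)
    have hgconst : ∀ j : Fin t, ∀ γ ∈ C j, g.eval γ = g.eval ((hne j).choose) :=
      fun j γ hγ => (hA g).mp hgA j γ hγ _ (hne j).choose_spec
    set dd : Fin t → K := fun j => if h : g.eval ((hne j).choose) = 0 then 0 else
      (IsAlgClosed.exists_pow_nat_eq (g.eval ((hne j).choose)) (n := 2) (by norm_num)).choose with hdd
    have hddsq : ∀ j, dd j ^ 2 = g.eval ((hne j).choose) := by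
      intro j
      rw [hdd]
      by_cases h : g.eval ((hne j).choose) = 0
      · simp [h]
      · simp only [dif_neg h]
        exact (IsAlgClosed.exists_pow_nat_eq (g.eval ((hne j).choose)) (n := 2) (by norm_num)).choose_spec
    have hddi : dd i = 0 := by
      rw [hdd]
      simp [hgval _ (hne i).choose_spec]
    set valF : K → K := fun γ => if h : ∃ j, γ ∈ C j then dd h.choose else 0 with hvalFdef
    have hvalF : ∀ j : Fin t, ∀ γ ∈ C j, valF γ = dd j := by
      intro j γ hγ
      have hex : ∃ j', γ ∈ C j' := ⟨j, hγ⟩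
      have hch : hex.choose = j := by
        by_contra hne'
        exact Finset.disjoint_left.mp (hdisj _ _ hne') hex.choose_spec hγ
      rw [hvalFdef]
      simp only [dif_pos hex, hch]
    obtain ⟨F, hF⟩ := hermite_exists T valF (fun _ => 0)
    have hFA : F ∈ A := (hA F).mpr fun j β hβ γ hγ => by
      rw [(hF β (hmemT j β hβ)).1, (hF γ (hmemT j γ hγ)).1, hvalF j β hβ, hvalF j γ hγ]
    have hFα : F.eval α = 0 := by
      rw [(hF α (hsub hα)).1, hvalF i α hα, hddi]
    obtain ⟨E, hE⟩ := hermite_exists T (fun γ => g.eval γ) (fun _ => 0)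
    have hEA : E ∈ A := (hA E).mpr fun j β hβ γ hγ => by
      rw [(hE β (hmemT j β hβ)).1, (hE γ (hmemT j γ hγ)).1,
        hgconst j β hβ, hgconst j γ hγ]
    -- F^2 - E is doubly vanishing on T
    have hFE : P ^ 2 ∣ F ^ 2 - E := by
      rw [hP]
      refine sq_nodal_dvd T _ (fun γ hγ => ?_) (fun γ hγ => ?_)
      · obtain ⟨j, -, hj⟩ := Finset.mem_biUnion.mp hγ
        rw [eval_sub, eval_pow, (hF γ hγ).1, (hE γ hγ).1, hvalF j γ hj, hddsq j,
          hgconst j γ hj, sub_self]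
      · simp [derivative_sub, sq, derivative_mul, (hF γ hγ).2, (hE γ hγ).2]
    obtain ⟨v, hv⟩ := hFE
    have hDE : D ⟨E, hEA⟩ = 0 := by
      have hFF : D ⟨F * F, A.mul_mem hFA hFA⟩ = 0 :=
        hDzero α D hD _ F F hFA hFA hFα hFα rfl
      have hPv : D ⟨P * (P * v), hPA _⟩ = 0 :=
        hDzero α D hD _ P (P * v) hPmem (hPA _) hPαz (by rw [eval_mul, hPαz, zero_mul]) rfl
      have hEeq : (⟨E, hEA⟩ : A) = ⟨F * F, A.mul_mem hFA hFA⟩ - ⟨P * (P * v), hPA _⟩ := by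
        apply Subtype.ext
        push_cast
        have := hv
        rw [sub_eq_iff_eq_add] at this
        rw [show F * F = F ^ 2 by ring, this]
        ring
      rw [hEeq, map_sub, hFF, hPv, sub_zero]
    -- g - E is divisible by Q^2 * P'
    have hQ2 : Q ^ 2 ∣ g - E := by
      rw [hQ]
      refine sq_nodal_dvd (C i) _ (fun γ hγ => ?_) (fun γ hγ => ?_)
      · rw [eval_sub, (hE γ (hsub hγ)).1, hgval γ hγ, sub_self]
      · rw [derivative_sub, eval_sub, (hE γ (hsub hγ)).2, hgder γ hγ, sub_self]
    have hP'dvd : P' ∣ g - E := by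
      rw [hP']
      refine nodal_dvd (T \ C i) _ (fun γ hγ => ?_)
      rw [eval_sub, (hE γ (Finset.mem_sdiff.mp hγ).1).1, sub_self]
    have hcopQP' : IsCoprime (Q ^ 2) P' := by
      refine IsCoprime.pow_left ?_
      rw [hQ, hP']
      exact (isCoprime_nodal fun γ hγ => hQnz γ (Finset.mem_sdiff.mp hγ).2).symm
    obtain ⟨k, hk⟩ := hcopQP'.mul_dvd hQ2 hP'dvd
    -- the interpolant r
    set r : Polynomial K := Lagrange.interpolate T id
      (fun γ => if γ ∈ C i then 1 else (Q.eval γ)⁻¹) with hr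
    have hrval : ∀ γ ∈ T, r.eval γ = if γ ∈ C i then 1 else (Q.eval γ)⁻¹ := fun γ hγ =>
      Lagrange.eval_interpolate_at_node _ (Set.injOn_id _) hγ
    have hQrA : Q * r ∈ A := (hA _).mpr fun j β hβ γ hγ => by
      rcases eq_or_ne j i with rfl | hji
      · rw [eval_mul, eval_mul, hQz β hβ, hQz γ hγ, zero_mul, zero_mul]
      · have hβi : β ∉ C i := Finset.disjoint_left.mp (hdisj j i hji) hβ
        have hγi : γ ∉ C i := Finset.disjoint_left.mp (hdisj j i hji) hγ
        rw [eval_mul, eval_mul, hrval β (hmemT j β hβ), hrval γ (hmemT j γ hγ),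
          if_neg hβi, if_neg hγi, mul_inv_cancel₀ (hQnz β hβi), mul_inv_cancel₀ (hQnz γ hγi)]
    have hQrα : (Q * r).eval α = 0 := by rw [eval_mul, hQz α hα, zero_mul]
    have hcop : IsCoprime P' r := by
      rw [hP']
      refine isCoprime_nodal fun γ hγ => ?_
      rw [hrval γ (Finset.mem_sdiff.mp hγ).1, if_neg (Finset.mem_sdiff.mp hγ).2]
      exact inv_ne_zero (hQnz γ (Finset.mem_sdiff.mp hγ).2)
    obtain ⟨aa, bb, hab⟩ := hcop
    have hdecomp : g - E = P * (P * (aa * k)) + (Q * r) * (P * (bb * k)) := by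
      rw [hk, hPQP']
      calc Q ^ 2 * P' * k = Q ^ 2 * P' * k * (aa * P' + bb * r) := by rw [hab, mul_one]
        _ = Q * P' * (Q * P' * (aa * k)) + Q * r * (Q * P' * (bb * k)) := by ring
    have hDgE : D ⟨g - E, A.sub_mem hgA hEA⟩ = 0 := by
      have e1 : D ⟨P * (P * (aa * k)), hPA _⟩ = 0 :=
        hDzero α D hD _ P (P * (aa * k)) hPmem (hPA _) hPαz
          (by rw [eval_mul, hPαz, zero_mul]) rfl
      have e2 : D ⟨(Q * r) * (P * (bb * k)), A.mul_mem hQrA (hPA _)⟩ = 0 :=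
        hDzero α D hD _ (Q * r) (P * (bb * k)) hQrA (hPA _) hQrα
          (by rw [eval_mul, hPαz, zero_mul]) rfl
      have heq : (⟨g - E, A.sub_mem hgA hEA⟩ : A)
          = ⟨P * (P * (aa * k)), hPA _⟩ + ⟨(Q * r) * (P * (bb * k)), A.mul_mem hQrA (hPA _)⟩ := by
        apply Subtype.ext
        push_cast
        rw [hdecomp]
      rw [heq, map_add, e1, e2, add_zero]
    have hDg : D ⟨g, hgA⟩ = 0 := by
      have : (⟨g, hgA⟩ : A) = ⟨g - E, A.sub_mem hgA hEA⟩ + ⟨E, hEA⟩ := by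
        apply Subtype.ext; push_cast; ring
      rw [this, map_add, hDgE, hDE, add_zero]
    -- final assembly
    have hfg : f = ⟨g, hgA⟩ + (f : Polynomial K).eval α • (1 : A)
        + ∑ β ∈ C i, (Polynomial.derivative (f : Polynomial K)).eval β • ⟨P * w β, hPA _⟩ := by
      apply Subtype.ext
      push_cast
      simp only [hg, Polynomial.smul_eq_C_mul]
      ring
    conv_lhs => rw [hfg]
    simp only [map_add, map_smul, map_sum, smul_eq_mul, hDg, hD1 α D hD, mul_zero, zero_add]
    exact Finset.sum_congr rfl fun β _ => mul_comm _ _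
  -- Case 2: α outside all clusters
  · intro α hα D hD
    have hPα : P.eval α ≠ 0 := by
      rw [hP, Lagrange.eval_nodal]
      refine Finset.prod_ne_zero_iff.mpr fun γ hγ => sub_ne_zero_of_ne ?_
      rintro rfl
      obtain ⟨i, -, hi⟩ := Finset.mem_biUnion.mp hγ
      exact hα i hi
    set h0 : Polynomial K := P * (P * (X - Polynomial.C α)) with hh0def
    have hh0 : h0 ∈ A := hPA _
    refine ⟨D ⟨h0, hh0⟩ / (P.eval α) ^ 2, fun f => ?_⟩
    set a : K := (f : Polynomial K).eval α with ha
    set b : K := (Polynomial.derivative (f : Polynomial K)).eval α with hb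
    set s : K := b / (P.eval α) ^ 2 with hs
    set g : Polynomial K := (f : Polynomial K) - Polynomial.C a - Polynomial.C s * h0 with hg
    have hgA : g ∈ A := A.sub_mem (A.sub_mem f.2 (subalg_mem_C a))
      (A.mul_mem (subalg_mem_C s) hh0)
    have hh0α : h0.eval α = 0 := by simp [hh0def]
    have hgval : g.eval α = 0 := by
      simp [hg, hh0α, ha]
    have hh0der : (Polynomial.derivative h0).eval α = (P.eval α) ^ 2 := by
      simp only [hh0def, derivative_mul, derivative_sub, derivative_X, derivative_C, sub_zero,
        mul_one, eval_add, eval_mul, eval_sub, eval_X, eval_C, sub_self, mul_zero, zero_add]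
      ring
    have hgder : (Polynomial.derivative g).eval α = 0 := by
      simp only [hg, derivative_sub, derivative_mul, derivative_C, zero_mul, eval_sub, eval_add,
        eval_mul, eval_C, eval_zero, hh0der, hh0α, mul_zero, zero_add, sub_zero, ← hb, hs]
      field_simp
      ring
    have hdvd : (X - Polynomial.C α) ^ 2 ∣ g := by
      have h := sq_nodal_dvd {α} g (by simpa using hgval) (by simpa using hgder)
      simpa [Lagrange.nodal] using h
    obtain ⟨q, hq⟩ := hdvd
    have hDg : D ⟨g, hgA⟩ = 0 := by
      have hPP : P * P ∈ A := by have := hPA P; exact this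
      have h1 : D ⟨g * (P * P), A.mul_mem hgA hPP⟩
          = D ⟨g, hgA⟩ * (P * P).eval α + g.eval α * D ⟨P * P, hPP⟩ :=
        hDmul α D hD _ g (P * P) hgA hPP rfl
      have h2 : D ⟨g * (P * P), A.mul_mem hgA hPP⟩ = 0 := by
        refine hDzero α D hD _ (P * (X - Polynomial.C α))
          (P * ((X - Polynomial.C α) * q)) (hPA _) (hPA _) (by simp) (by simp) ?_
        show g * (P * P) = _
        rw [hq]; ring
      rw [h2, hgval, zero_mul, add_zero] at h1
      have hne : (P * P).eval α ≠ 0 := by rw [eval_mul]; exact mul_ne_zero hPα hPα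
      rcases mul_eq_zero.mp h1.symm with h | h
      · exact h
      · exact absurd h hne
    have hfg : f = ⟨g, hgA⟩ + a • (1 : A) + s • ⟨h0, hh0⟩ := by
      apply Subtype.ext
      push_cast
      simp only [hg, Polynomial.smul_eq_C_mul]
      ring
    rw [hfg]
    simp only [map_add, map_smul, smul_eq_mul, hDg, hD1 α D hD, mul_zero, zero_add, add_zero]
    rw [hs]
    field_simp
end

section
/- Let B be a K-subalgebra of K[x] of finite codimension, let α ∈ K with α ∉ Sp(B), and let A = {f ∈ B : f'(α) = 0} (the kernel in B of the trivial α-derivation f ↦ f'(α)). Then every α-derivation D of the subalgebra A has the form D(f) = a·f'''(α) + b·f''(α) for some constants a, b ∈ K, where f'' and f''' denote the second and third derivatives. -/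
open Polynomial

section Auxiliary

variable {K : Type*} [Field K]

lemma exists_nonconstant_mem (B : Subalgebra K (Polynomial K))
    (hfin : FiniteDimensional K (Polynomial K ⧸ Subalgebra.toSubmodule B)) :
    ∃ p ∈ B, 1 ≤ p.natDegree := by
  classical
  set π := (Subalgebra.toSubmodule B).mkQ with hπ
  have hnl : ¬ LinearIndependent K (fun n : ℕ => π (X ^ (n+1) : Polynomial K)) :=
    Module.Finite.not_linearIndependent_of_infinite _
  rw [linearIndependent_iff'] at hnl
  push_neg at hnl
  obtain ⟨s, g, hsum, i₀, hi₀s, hi₀⟩ := hnl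
  refine ⟨∑ i ∈ s, g i • X ^ (i+1), ?_, ?_⟩
  · have h0 : π (∑ i ∈ s, g i • X ^ (i+1) : Polynomial K) = 0 := by
      rw [map_sum]; simp_rw [map_smul]; exact hsum
    rw [hπ, Submodule.mkQ_apply, Submodule.Quotient.mk_eq_zero] at h0
    exact h0
  · have hc : (∑ i ∈ s, g i • (X:Polynomial K) ^ (i+1)).coeff (i₀+1) = g i₀ := by
      rw [finset_sum_coeff]
      simp_rw [Polynomial.coeff_smul, Polynomial.coeff_X_pow]
      simp [hi₀s]
    have := le_natDegree_of_ne_zero (hc ▸ hi₀)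
    omega

lemma exists_conductor_s19 (B : Subalgebra K (Polynomial K))
    (hfin : FiniteDimensional K (Polynomial K ⧸ Subalgebra.toSubmodule B)) :
    ∃ g : Polynomial K, g ≠ 0 ∧ ∀ u : Polynomial K, g * u ∈ B := by
  classical
  obtain ⟨p, hpB, hpdeg⟩ := exists_nonconstant_mem B hfin
  set Bs := Subalgebra.toSubmodule B with hBs
  have hle : Bs ≤ Submodule.comap (LinearMap.mulLeft K p) Bs := by
    intro b hb
    exact B.mul_mem hpB hb
  set φ := Submodule.mapQ Bs Bs (LinearMap.mulLeft K p) hle with hφdef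
  have hφ1 : ∀ u : Polynomial K, φ (Bs.mkQ u) = Bs.mkQ (p * u) := by
    intro u
    rw [hφdef, Submodule.mkQ_apply, Submodule.mapQ_apply]
    rfl
  have hφ : ∀ (k : ℕ) (u : Polynomial K), (φ ^ k) (Bs.mkQ u) = Bs.mkQ (p ^ k * u) := by
    intro k
    induction k with
    | zero => intro u; simp
    | succ k ih =>
        intro u
        rw [pow_succ, Module.End.mul_apply, hφ1 u, ih (p * u)]
        congr 1
        ring
  have hnl : ¬ LinearIndependent K (fun k : ℕ => φ ^ k) :=
    Module.Finite.not_linearIndependent_of_infinite _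
  rw [linearIndependent_iff'] at hnl
  push_neg at hnl
  obtain ⟨s, g, hsum, k₀, hk₀s, hk₀⟩ := hnl
  set a : Polynomial K := ∑ k ∈ s, C (g k) * X ^ k with ha
  have ha0 : a ≠ 0 := by
    have hc : a.coeff k₀ = g k₀ := by
      rw [ha, finset_sum_coeff]
      simp_rw [coeff_C_mul, Polynomial.coeff_X_pow]
      simp [hk₀s]
    intro h
    rw [h, coeff_zero] at hc
    exact hk₀ hc.symm
  have hsc : a.comp p = ∑ k ∈ s, C (g k) * p ^ k := by
    rw [ha, ← Polynomial.coe_compRingHom_apply, map_sum]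
    refine Finset.sum_congr rfl fun k _ => ?_
    simp [Polynomial.coe_compRingHom_apply, mul_comp, C_comp, X_pow_comp]
  have hcomp : ∀ u : Polynomial K, a.comp p * u ∈ B := by
    intro u
    have h1 : a.comp p * u = ∑ k ∈ s, g k • (p ^ k * u) := by
      rw [hsc, Finset.sum_mul]
      refine Finset.sum_congr rfl fun k _ => ?_
      rw [Polynomial.smul_eq_C_mul]
      ring
    have h2 : Bs.mkQ (a.comp p * u) = 0 := by
      rw [h1, map_sum]
      simp_rw [map_smul, hφ _ u |>.symm]
      have h3 : (∑ k ∈ s, g k • φ ^ k) (Bs.mkQ u) = 0 := by rw [hsum]; rfl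
      rw [← h3]
      simp [LinearMap.sum_apply, LinearMap.smul_apply]
    rw [Submodule.mkQ_apply, Submodule.Quotient.mk_eq_zero] at h2
    exact h2
  have hcompne : a.comp p ≠ 0 := by
    rcases Nat.eq_zero_or_pos a.natDegree with h0 | hpos
    · rw [Polynomial.eq_C_of_natDegree_eq_zero h0, C_comp, Ne, Polynomial.C_eq_zero]
      intro hz
      apply ha0
      rw [Polynomial.eq_C_of_natDegree_eq_zero h0, hz, map_zero]
    · intro h
      have hnd := Polynomial.natDegree_comp (p := a) (q := p)
      rw [h, natDegree_zero] at hnd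
      have : a.natDegree * p.natDegree ≠ 0 := Nat.mul_ne_zero (by omega) (by omega)
      omega
  exact ⟨a.comp p, hcompne, hcomp⟩

lemma conductor_step [IsAlgClosed K] (B : Subalgebra K (Polynomial K)) (α : K)
    (hder : ∃ f ∈ B, (derivative f).eval α ≠ 0)
    (hsep : ∀ β : K, β ≠ α → ∃ f ∈ B, f.eval α ≠ f.eval β)
    (e : ℕ) (h : Polynomial K) (hh : h.eval α ≠ 0)
    (hcond : ∀ u, (((X : Polynomial K) - C α)^(e+1) * h) * u ∈ B) :
    ∀ u, (((X : Polynomial K) - C α)^e * h) * u ∈ B := by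
  classical
  set t : Polynomial K := X - C α with ht
  have htα : t.eval α = 0 := by simp [ht]
  -- an element of B vanishing at α with nonzero derivative
  obtain ⟨f0, hf0B, hf0d⟩ := hder
  set u₀ := f0 - C (f0.eval α) with hu₀
  have hCmem : ∀ x : K, C x ∈ B := by
    intro x
    have := B.algebraMap_mem x
    rwa [Polynomial.algebraMap_eq] at this
  have hu₀B : u₀ ∈ B := B.sub_mem hf0B (hCmem _)
  obtain ⟨u₁, hu₁⟩ : t ∣ u₀ := X_sub_C_dvd_sub_C_eval
  have hu₁α : u₁.eval α ≠ 0 := by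
    have hd : derivative u₀ = u₁ + t * derivative u₁ := by
      rw [hu₁, derivative_mul]
      simp [ht]
    have : (derivative u₀).eval α = u₁.eval α := by
      rw [hd]
      simp [htα]
    rw [hu₀, derivative_sub, derivative_C, sub_zero] at this
    rwa [this] at hf0d
  -- separating elements for the roots of h
  have hsfun : ∀ β : K, β ≠ α → ∃ sβ ∈ B, sβ.eval α = 1 ∧ sβ.eval β = 0 := by
    intro β hβ
    obtain ⟨f, hfB, hfne⟩ := hsep β hβ
    refine ⟨C (f.eval α - f.eval β)⁻¹ * (f - C (f.eval β)), B.mul_mem (hCmem _)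
      (B.sub_mem hfB (hCmem _)), ?_, ?_⟩
    · rw [eval_mul, eval_C, eval_sub, eval_C]
      exact inv_mul_cancel₀ (sub_ne_zero.mpr hfne)
    · rw [eval_mul, eval_sub, eval_C, eval_C, sub_self, mul_zero]
  choose sfun hsB hs1 hs0 using hsfun
  set S : K → Polynomial K := fun β => if hβ : β = α then 1 else sfun β hβ with hS
  set d := h.natDegree with hd
  set R := h.roots.toFinset with hR
  have hhne : h ≠ 0 := fun hz => hh (by rw [hz]; simp)
  have hβα : ∀ β ∈ R, β ≠ α := by
    intro β hβ heq
    subst heq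
    exact hh (Polynomial.isRoot_of_mem_roots (Multiset.mem_toFinset.mp hβ))
  set Pi0 := ∏ β ∈ R, (S β)^d with hPi0
  have hPiB : Pi0 ∈ B := prod_mem fun β hβ => pow_mem (by
    rw [hS]
    simp only
    rw [dif_neg (hβα β hβ)]
    exact hsB β (hβα β hβ)) d
  have hPia : Pi0.eval α = 1 := by
    rw [hPi0, eval_prod]
    apply Finset.prod_eq_one
    intro β hβ
    rw [eval_pow, hS]
    simp only
    rw [dif_neg (hβα β hβ), hs1 β (hβα β hβ), one_pow]
  have hcard : Multiset.card h.roots = d := splits_iff_card_roots.mp (IsAlgClosed.splits h)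
  have hfact : C h.leadingCoeff * (h.roots.map fun a => X - C a).prod = h :=
    C_leadingCoeff_mul_prod_multiset_X_sub_C hcard
  have hdvdPi : h ∣ Pi0 := by
    have h1 : (h.roots.map fun a => (X : Polynomial K) - C a).prod
        = ∏ β ∈ R, ((X : Polynomial K) - C β) ^ (h.roots.count β) :=
      Finset.prod_multiset_map_count _ _
    have h2 : (∏ β ∈ R, ((X : Polynomial K) - C β) ^ (h.roots.count β)) ∣ Pi0 := by
      apply Finset.prod_dvd_prod_of_dvd
      intro β hβ
      have hdvdS : (X : Polynomial K) - C β ∣ S β := by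
        rw [dvd_iff_isRoot, IsRoot, hS]
        simp only
        rw [dif_neg (hβα β hβ)]
        exact hs0 β (hβα β hβ)
      calc ((X : Polynomial K) - C β) ^ (h.roots.count β)
          ∣ (S β) ^ (h.roots.count β) := pow_dvd_pow_of_dvd hdvdS _
        _ ∣ (S β) ^ d := pow_dvd_pow _ (hcard ▸ Multiset.count_le_card β h.roots)
    obtain ⟨v, hv⟩ := h1 ▸ h2
    have h3 : C (h.leadingCoeff)⁻¹ * (C h.leadingCoeff * (h.roots.map fun a => X - C a).prod)
        = C (h.leadingCoeff)⁻¹ * h := by rw [hfact]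
    rw [← mul_assoc, ← C_mul, inv_mul_cancel₀ (leadingCoeff_ne_zero.mpr hhne), C_1,
      one_mul] at h3
    exact ⟨C (h.leadingCoeff)⁻¹ * v, by rw [hv, h3]; ring⟩
  have hcop : IsCoprime t h := by
    obtain ⟨qq, hqq⟩ : t ∣ h - C (h.eval α) := X_sub_C_dvd_sub_C_eval
    refine ⟨-(C (h.eval α)⁻¹) * qq, C (h.eval α)⁻¹, ?_⟩
    have h5 : -(C (h.eval α)⁻¹) * qq * t + C (h.eval α)⁻¹ * h
        = C (h.eval α)⁻¹ * (h - t * qq) := by ring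
    have h6 : h - t * qq = C (h.eval α) := by linear_combination hqq
    rw [h5, h6, ← C_mul, inv_mul_cancel₀ hh, C_1]
  intro u
  set c : K := h.eval α * u.eval α / (u₁.eval α ^ e) with hc
  set P := u₀ ^ e * Pi0 with hP
  have hPB : P ∈ B := B.mul_mem (pow_mem hu₀B e) hPiB
  set D₀ := (t^e * h) * u - C c * P with hD₀
  have hth : D₀ = t^e * (h * u - C c * (u₁^e * Pi0)) := by
    rw [hD₀, hP, hu₁, mul_pow]
    ring
  have hdvd1 : t^(e+1) ∣ D₀ := by
    rw [hth, pow_succ]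
    apply mul_dvd_mul_left
    rw [dvd_iff_isRoot, IsRoot, eval_sub, eval_mul, eval_mul, eval_mul, eval_pow, eval_C,
      hPia, hc]
    field_simp
    ring
  have hdvd2 : h ∣ D₀ := by
    rw [hD₀]
    apply dvd_sub
    · exact ⟨t^e * u, by ring⟩
    · obtain ⟨v, hv⟩ := hdvdPi
      exact ⟨C c * u₀^e * v, by rw [hP, hv]; ring⟩
  obtain ⟨v, hv⟩ : t^(e+1) * h ∣ D₀ := (hcop.pow_left).mul_dvd hdvd1 hdvd2
  have hfin : (t^e * h) * u = C c * P + (t^(e+1) * h) * v := by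
    rw [← hv, hD₀]
    ring
  rw [ht] at hfin ⊢
  rw [hfin]
  exact B.add_mem (B.mul_mem (hCmem c) hPB) (hcond v)

lemma exists_conductor_unit [IsAlgClosed K] (B : Subalgebra K (Polynomial K)) (α : K)
    (hder : ∃ f ∈ B, (derivative f).eval α ≠ 0)
    (hsep : ∀ β : K, β ≠ α → ∃ f ∈ B, f.eval α ≠ f.eval β)
    (g : Polynomial K) (hg0 : g ≠ 0) (hgc : ∀ u, g * u ∈ B) :
    ∃ q : Polynomial K, q.eval α ≠ 0 ∧ ∀ u, q * u ∈ B := by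
  classical
  suffices H : ∀ n : ℕ, ∀ g : Polynomial K, g ≠ 0 → (∀ u, g * u ∈ B) →
      rootMultiplicity α g ≤ n → ∃ q : Polynomial K, q.eval α ≠ 0 ∧ ∀ u, q * u ∈ B by
    exact H (rootMultiplicity α g) g hg0 hgc le_rfl
  intro n
  induction n with
  | zero =>
      intro g hg0 hgc hm
      refine ⟨g, ?_, hgc⟩
      intro hz
      have : 0 < rootMultiplicity α g := (rootMultiplicity_pos hg0).mpr hz
      omega
  | succ n ih =>
      intro g hg0 hgc hm
      by_cases hz : g.eval α = 0
      · set m := rootMultiplicity α g with hmdef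
        have hmpos : 0 < m := (rootMultiplicity_pos hg0).mpr hz
        set h := g /ₘ ((X - C α) ^ m) with hhdef
        have hfact : (X - C α) ^ m * h = g := pow_mul_divByMonic_rootMultiplicity_eq g α
        have hh : h.eval α ≠ 0 := eval_divByMonic_pow_rootMultiplicity_ne_zero α hg0
        have hcond : ∀ u, (((X : Polynomial K) - C α) ^ ((m - 1) + 1) * h) * u ∈ B := by
          intro u
          have : (m - 1) + 1 = m := by omega
          rw [this, hfact]
          exact hgc u
        have hstep := conductor_step B α hder hsep (m - 1) h hh hcond
        have hne : ((X : Polynomial K) - C α) ^ (m - 1) * h ≠ 0 := by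
          apply mul_ne_zero (pow_ne_zero _ (X_sub_C_ne_zero α))
          intro h0
          rw [h0] at hh
          simp at hh
        have hmult : rootMultiplicity α (((X : Polynomial K) - C α) ^ (m - 1) * h) = m - 1 := by
          rw [rootMultiplicity_mul hne, rootMultiplicity_X_sub_C_pow,
            rootMultiplicity_eq_zero (by simpa [IsRoot] using hh), add_zero]
        exact ih _ hne hstep (by omega)
      · exact ⟨g, hz, hgc⟩

lemma pow4_dvd {α : K} [CharZero K] {p : Polynomial K} (h0 : p.eval α = 0)
    (h1 : (derivative p).eval α = 0)
    (h2 : (derivative (derivative p)).eval α = 0)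
    (h3 : (derivative (derivative (derivative p))).eval α = 0) :
    ((X : Polynomial K) - C α)^4 ∣ p := by
  set t : Polynomial K := X - C α with ht
  have htα : t.eval α = 0 := by simp [ht]
  have htd : derivative t = 1 := by simp [ht]
  obtain ⟨p₁, hp₁⟩ : t ∣ p := (dvd_iff_isRoot).mpr h0
  have e1 : (derivative p).eval α = p₁.eval α := by
    rw [hp₁, derivative_mul, htd]
    simp [htα]
  obtain ⟨p₂, hp₂⟩ : t ∣ p₁ := (dvd_iff_isRoot).mpr (show eval α p₁ = 0 by rw [← e1]; exact h1)
  have hp' : p = t^2 * p₂ := by rw [hp₁, hp₂]; ring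
  have e2 : (derivative (derivative p)).eval α = 2 * p₂.eval α := by
    rw [hp', ht]
    simp [derivative_mul, derivative_pow]
  obtain ⟨p₃, hp₃⟩ : t ∣ p₂ := (dvd_iff_isRoot).mpr (show eval α p₂ = 0 by
    have : (2 : K) * p₂.eval α = 0 := by rw [← e2]; exact h2
    have h2ne : (2 : K) ≠ 0 := two_ne_zero
    exact (mul_eq_zero.mp this).resolve_left h2ne)
  have hp'' : p = t^3 * p₃ := by rw [hp', hp₃]; ring
  have e3 : (derivative (derivative (derivative p))).eval α = 6 * p₃.eval α := by
    rw [hp'', ht]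
    simp [derivative_mul, derivative_pow]
    norm_num
  obtain ⟨p₄, hp₄⟩ : t ∣ p₃ := (dvd_iff_isRoot).mpr (show eval α p₃ = 0 by
    have : (6 : K) * p₃.eval α = 0 := by rw [← e3]; exact h3
    have h6ne : (6 : K) ≠ 0 := by norm_num
    exact (mul_eq_zero.mp this).resolve_left h6ne)
  exact ⟨p₄, by rw [hp'', hp₄]; ring⟩

end Auxiliary

theorem derivations_of_kernel_of_trivial_derivation
    {K : Type*} [Field K] [IsAlgClosed K] [CharZero K]
    (B : Subalgebra K (Polynomial K))
    (hfin : FiniteDimensional K (Polynomial K ⧸ Subalgebra.toSubmodule B))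
    (α : K) (hα : α ∉ subalgebraSpectrum B)
    (A : Subalgebra K (Polynomial K))
    (hA : ∀ f : Polynomial K, f ∈ A ↔ f ∈ B ∧ (Polynomial.derivative f).eval α = 0)
    (D : A →ₗ[K] K) (hD : IsAlphaDerivation A α D) :
    ∃ a b : K, ∀ f : A,
      D f = a * ((Polynomial.derivative)^[3] (f : Polynomial K)).eval α +
            b * ((Polynomial.derivative)^[2] (f : Polynomial K)).eval α := by
  classical
  rw [subalgebraSpectrum, Set.mem_setOf_eq] at hα
  push_neg at hα
  obtain ⟨hder, hsep⟩ := hα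
  obtain ⟨g0, hg00, hg0c⟩ := exists_conductor_s19 B hfin
  obtain ⟨q, hqα, hqc⟩ := exists_conductor_unit B α hder hsep g0 hg00 hg0c
  set t : Polynomial K := X - C α with ht
  have htα : t.eval α = 0 := by simp [ht]
  -- membership of t^2 * (q * v) in A
  have hmem2 : ∀ v : Polynomial K, t^2 * (q * v) ∈ A := by
    intro v
    rw [hA]
    refine ⟨by rw [show t^2 * (q * v) = q * (t^2 * v) by ring]; exact hqc _, ?_⟩
    rw [ht]
    simp [derivative_mul, derivative_pow]
  set qa := q.eval α with hqa
  set qd := (derivative q).eval α with hqd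
  -- the correcting element s'
  set w : Polynomial K := C (qa⁻¹ * qa⁻¹) + C (-(2 * qd * (qa⁻¹ * qa⁻¹)) / qa) * t with hw
  set s' : Polynomial K := q * (q * w) with hs'
  have hs'B : s' ∈ B := hqc _
  have hwα : w.eval α = qa⁻¹ * qa⁻¹ := by simp [hw, htα]
  have hwd : (derivative w).eval α = -(2 * qd * (qa⁻¹ * qa⁻¹)) / qa := by
    rw [hw, ht]
    simp
  have hs'α : s'.eval α = 1 := by
    rw [hs', eval_mul, eval_mul, hwα, ← hqa]
    field_simp
  have hs'd : (derivative s').eval α = 0 := by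
    rw [hs']
    simp only [derivative_mul, eval_add, eval_mul, hwα, hwd, ← hqa, ← hqd]
    field_simp
    ring
  have hs'A : s' ∈ A := (hA s').mpr ⟨hs'B, hs'd⟩
  -- key vanishing lemma
  have key : ∀ f : A, (t^4 ∣ (f : Polynomial K)) → D f = 0 := by
    intro f hdvd
    obtain ⟨u, hu⟩ := hdvd
    have hfα : (f : Polynomial K).eval α = 0 := by rw [hu]; simp [htα]
    have hg₁A : t^2 * (q * 1) ∈ A := hmem2 1
    have hg₂A : t^2 * (q * (u * w)) ∈ A := hmem2 (u * w)
    have hDf : D f = D (f * ⟨s', hs'A⟩) := by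
      rw [hD f ⟨s', hs'A⟩]
      show D f = D f * s'.eval α + (f : Polynomial K).eval α * D ⟨s', hs'A⟩
      rw [hs'α, hfα]
      ring
    have heq : f * ⟨s', hs'A⟩ = (⟨_, hg₁A⟩ : A) * ⟨_, hg₂A⟩ := by
      apply Subtype.ext
      show (f : Polynomial K) * s' = (t^2 * (q * 1)) * (t^2 * (q * (u * w)))
      rw [hu, hs']
      ring
    have h1 : (t^2 * (q * 1)).eval α = 0 := by simp [htα]
    have h2 : (t^2 * (q * (u * w))).eval α = 0 := by simp [htα]
    rw [hDf, heq, hD]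
    show D ⟨_, hg₁A⟩ * (t^2 * (q * (u * w))).eval α
        + (t^2 * (q * 1)).eval α * D ⟨_, hg₂A⟩ = 0
    rw [h1, h2]
    ring
  -- D kills constants
  have hD1 : D 1 = 0 := by
    have h11 := hD 1 1
    rw [mul_one] at h11
    have hcoe : ((1 : A) : Polynomial K).eval α = 1 := by
      rw [OneMemClass.coe_one, eval_one]
    rw [hcoe, mul_one, one_mul] at h11
    linear_combination -h11
  -- basis elements
  have hf₀A : t^2 * (q * 1) ∈ A := hmem2 1
  have hf₁A : t^2 * (q * t) ∈ A := hmem2 t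
  set F₀ : A := ⟨_, hf₀A⟩
  set F₁ : A := ⟨_, hf₁A⟩
  have E00 : (t^2 * (q * 1)).eval α = 0 := by simp [htα]
  have E10 : (t^2 * (q * t)).eval α = 0 := by simp [htα]
  have E20 : (derivative (derivative (t^2 * (q * 1)))).eval α = 2 * qa := by
    rw [ht, hqa]
    simp [derivative_mul, derivative_pow]
  have E30 : (derivative (derivative (derivative (t^2 * (q * 1))))).eval α = 6 * qd := by
    rw [ht, hqd]
    simp [derivative_mul, derivative_pow]
    ring
  have E21 : (derivative (derivative (t^2 * (q * t)))).eval α = 0 := by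
    rw [ht]
    simp [derivative_mul, derivative_pow]
  have E31 : (derivative (derivative (derivative (t^2 * (q * t))))).eval α = 6 * qa := by
    rw [ht, hqa]
    simp [derivative_mul, derivative_pow]
    ring
  refine ⟨D F₁ / (6 * qa), (D F₀ - (D F₁ / (6 * qa)) * (6 * qd)) / (2 * qa), ?_⟩
  intro f
  set a := D F₁ / (6 * qa) with haa
  set b := (D F₀ - a * (6 * qd)) / (2 * qa) with hbb
  set c₀ := (f : Polynomial K).eval α with hc₀
  set c₂ := (derivative (derivative (f : Polynomial K))).eval α with hc₂
  set c₃ := (derivative (derivative (derivative (f : Polynomial K)))).eval α with hc₃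
  set l₀ := c₂ / (2 * qa) with hl₀
  set l₁ := (c₃ - l₀ * (6 * qd)) / (6 * qa) with hl₁
  set g : A := f - c₀ • 1 - l₀ • F₀ - l₁ • F₁ with hg
  have hgcoe : (g : Polynomial K)
      = (f : Polynomial K) - C c₀ - C l₀ * (t^2 * (q * 1)) - C l₁ * (t^2 * (q * t)) := by
    rw [hg]
    push_cast
    simp [Polynomial.smul_eq_C_mul, F₀, F₁]
  have hderA : ∀ x : A, (derivative (x : Polynomial K)).eval α = 0 := by
    intro x
    exact ((hA x).mp x.2).2
  have hq6 : (6 : K) * qa ≠ 0 := by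
    apply mul_ne_zero _ hqα
    norm_num
  have hq2 : (2 : K) * qa ≠ 0 := by
    apply mul_ne_zero _ hqα
    norm_num
  have hdvdg : t^4 ∣ (g : Polynomial K) := by
    have d0 : (derivative (t^2 * (q * 1))).eval α = 0 := by
      rw [ht]; simp [derivative_mul, derivative_pow]
    have d1 : (derivative (t^2 * (q * t))).eval α = 0 := by
      rw [ht]; simp [derivative_mul, derivative_pow]
    rw [ht]
    apply pow4_dvd
    · rw [hgcoe]
      simp [htα, ← hc₀]
    · rw [hgcoe]
      simp only [derivative_sub, derivative_C, sub_zero, derivative_C_mul, eval_sub, eval_mul,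
        eval_C]
      rw [hderA f, d0, d1]
      ring
    · rw [hgcoe]
      simp only [derivative_sub, derivative_C, sub_zero, derivative_C_mul, eval_sub, eval_mul,
        eval_C]
      rw [← hc₂, E20, E21, hl₀]
      field_simp
      ring
    · rw [hgcoe]
      simp only [derivative_sub, derivative_C, sub_zero, derivative_C_mul, eval_sub, eval_mul,
        eval_C]
      rw [← hc₃, E30, E31, hl₁]
      field_simp
      ring
  have hDg : D g = 0 := key g hdvdg
  rw [hg] at hDg
  simp only [map_sub, map_smul, hD1, smul_eq_mul, mul_zero] at hDg
  have hDf : D f = l₀ * D F₀ + l₁ * D F₁ := by linear_combination hDg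
  have hiter3 : (⇑(derivative (R := K)))^[3] (f : Polynomial K)
      = derivative (derivative (derivative (f : Polynomial K))) := rfl
  have hiter2 : (⇑(derivative (R := K)))^[2] (f : Polynomial K)
      = derivative (derivative (f : Polynomial K)) := rfl
  rw [hiter3, hiter2, ← hc₂, ← hc₃, hDf]
  rw [hl₀, hl₁, haa, hbb]
  field_simp
  ring
end
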